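/- Let G=(V,E) be an undirected polymatroidal network with source-sink pairs s_1t_1,…,s_kt_k and demands D_1,…,D_k. For every edge set F ⊆ E with D(F) > 0 there exists a set S ⊆ V such that the bi-partition cut δ_G(S) satisfies ν(δ_G(S))/D(δ_G(S)) ≤ 2·ν(F)/D(F); that is, the sparsest bi-partition cut is within a factor 2 of the sparsest edge cut. -/

import Mathlib

open Finset MeasureTheory
open scoped ENNReal Classical

/-- `UWalk ep1 ep2 s t p`: in the undirected graph whose edge `e` has endpoints
`ep1 e` and `ep2 e`, the list of edges `p` forms a walk from `s` to `t`. -/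
def UWalk {V E : Type} [DecidableEq V] (ep1 ep2 : E → V) : V → V → List E → Prop
  | s, t, [] => s = t
  | s, t, e :: p => (ep1 e = s ∨ ep2 e = s) ∧
      UWalk ep1 ep2 (if ep1 e = s then ep2 e else ep1 e) t p

/-- The list of vertices visited by an undirected walk starting at `s`. -/
def uwalkVerts {V E : Type} [DecidableEq V] (ep1 ep2 : E → V) : V → List E → List V
  | s, [] => [s]
  | s, e :: p => s :: uwalkVerts ep1 ep2 (if ep1 e = s then ep2 e else ep1 e) p

/-- A simple undirected path from `s` to `t`. -/
def UIsPath {V E : Type} [DecidableEq V] (ep1 ep2 : E → V) (s t : V) (p : List E) : Prop :=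
  UWalk ep1 ep2 s t p ∧ (uwalkVerts ep1 ep2 s p).Nodup

/-- `F` separates `s` and `t`: they lie in different connected components of `G∖F`. -/
def USep {V E : Type} [DecidableEq V] (ep1 ep2 : E → V) (F : Finset E) (s t : V) : Prop :=
  ¬ ∃ p : List E, UWalk ep1 ep2 s t p ∧ ∀ e ∈ p, e ∉ F

/-- `δ(S)`: the set of edges with exactly one endpoint in `S`. -/
def uvcut {V E : Type} [Fintype E] [DecidableEq V] (ep1 ep2 : E → V) (S : Finset V) :
    Finset E :=
  Finset.univ.filter (fun e => (ep1 e ∈ S ∧ ep2 e ∉ S) ∨ (ep1 e ∉ S ∧ ep2 e ∈ S))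

/-- Shortest-path distance (in `ℝ≥0∞`, `⊤` when unreachable) under edge lengths `len`. -/
noncomputable def udist {V E : Type} [DecidableEq V] (ep1 ep2 : E → V) (len : E → ℝ)
    (u v : V) : ℝ≥0∞ :=
  ⨅ p : { p : List E // UWalk ep1 ep2 u v p }, ENNReal.ofReal ((p.1.map len).sum)

/-- The Lovász extension of `ρ` on the ground set `ground`,
`ρ̂(x) = ∫_0^∞ ρ({e ∈ ground : x e ≥ θ}) dθ` (which agrees with `∫_0^1` when `x ≤ 1`). -/
noncomputable def lovaszExt {E : Type} [Fintype E] (ρ : Finset E → ℝ)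
    (ground : Finset E) (x : E → ℝ) : ℝ :=
  ∫ θ in Set.Ioi (0:ℝ), ρ (ground.filter (fun e => θ ≤ x e))

/-- An undirected polymatroidal network: a finite undirected graph together with,
for each node `v`, a polymatroid `rho v` on the set of edges incident to `v`. -/
structure UPolyNet (V E : Type) [Fintype V] [Fintype E] [DecidableEq V] [DecidableEq E] where
  ep1 : E → V
  ep2 : E → V
  rho : V → Finset E → ℝ
  rho_empty : ∀ v, rho v ∅ = 0
  rho_nonneg : ∀ v A, A ⊆ Finset.univ.filter (fun e => ep1 e = v ∨ ep2 e = v) → 0 ≤ rho v A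
  rho_mono : ∀ v A B, A ⊆ B → B ⊆ Finset.univ.filter (fun e => ep1 e = v ∨ ep2 e = v) →
    rho v A ≤ rho v B
  rho_submod : ∀ v A B, A ⊆ Finset.univ.filter (fun e => ep1 e = v ∨ ep2 e = v) →
    B ⊆ Finset.univ.filter (fun e => ep1 e = v ∨ ep2 e = v) →
    rho v (A ∪ B) + rho v (A ∩ B) ≤ rho v A + rho v B

namespace UPolyNet

variable {V E : Type} [Fintype V] [Fintype E] [DecidableEq V] [DecidableEq E]

/-- The set `δ(v)` of edges incident to `v` (the ground set of `rho v`). -/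
def incE (N : UPolyNet V E) (v : V) : Finset E :=
  Finset.univ.filter (fun e => N.ep1 e = v ∨ N.ep2 e = v)

/-- The cost `ν(F)` of the edge cut `F`: the minimum over valid assignments `g` of
the edges of `F` to their endpoints of `Σ_v ρ_v(g⁻¹(v))`. -/
noncomputable def cutCost (N : UPolyNet V E) (F : Finset E) : ℝ :=
  sInf { c : ℝ | ∃ g : E → V, (∀ e ∈ F, g e = N.ep1 e ∨ g e = N.ep2 e) ∧
    c = ∑ v : V, N.rho v ((N.incE v ∩ F).filter (fun e => g e = v)) }

/-- Total flow on an edge `e`. -/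
noncomputable def edgeFlow (N : UPolyNet V E) {ι : Type} [Fintype ι]
    (f : ι → List E → ℝ) (e : E) : ℝ :=
  ∑ i : ι, ∑ᶠ p ∈ {p : List E | e ∈ p}, f i p

/-- The rate of commodity `i`. -/
noncomputable def rate {ι : Type} (f : ι → List E → ℝ) (i : ι) : ℝ :=
  ∑ᶠ p : List E, f i p

/-- A feasible multicommodity flow for the source-sink pairs `(s i, t i)`. -/
structure IsFlow (N : UPolyNet V E) {ι : Type} [Fintype ι] (s t : ι → V)
    (f : ι → List E → ℝ) : Prop where
  nonneg : ∀ i p, 0 ≤ f i p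
  supp : ∀ i p, f i p ≠ 0 → UIsPath N.ep1 N.ep2 (s i) (t i) p
  fin : ∀ i, (Function.support (f i)).Finite
  cap : ∀ v, ∀ S ⊆ N.incE v, ∑ e ∈ S, N.edgeFlow f e ≤ N.rho v S

/-- `D(F)`: the total demand of the pairs separated by `F`. -/
noncomputable def sepDemand (N : UPolyNet V E) {ι : Type} [Fintype ι]
    (s t : ι → V) (D : ι → ℝ) (F : Finset E) : ℝ :=
  ∑ i : ι, if USep N.ep1 N.ep2 F (s i) (t i) then D i else 0

/-- The value of the maximum throughput multicommodity flow. -/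
noncomputable def maxThroughput (N : UPolyNet V E) {ι : Type} [Fintype ι]
    (s t : ι → V) : ℝ :=
  sSup { r : ℝ | ∃ f : ι → List E → ℝ, N.IsFlow s t f ∧ r = ∑ i : ι, rate f i }

/-- The value of the maximum concurrent multicommodity flow for demands `D`. -/
noncomputable def maxConcurrent (N : UPolyNet V E) {ι : Type} [Fintype ι]
    (s t : ι → V) (D : ι → ℝ) : ℝ :=
  sSup { lam : ℝ | ∃ f : ι → List E → ℝ, N.IsFlow s t f ∧ ∀ i, rate f i = lam * D i }

/-- The vector `d_v`: for an edge `e` incident to `v`, its portion `ℓ(e,v)`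
assigned to `v` by the fractional cut solution with portions `c1` (at `ep1`)
and `c2` (at `ep2`). -/
def dvec (N : UPolyNet V E) (c1 c2 : E → ℝ) (v : V) : E → ℝ :=
  fun e => if N.ep1 e = v then c1 e else c2 e

/-- `ρ̂_v(d_v)`, the contribution of the node `v` to the fractional cut cost. -/
noncomputable def nodeVol (N : UPolyNet V E) (c1 c2 : E → ℝ) (v : V) : ℝ :=
  lovaszExt (N.rho v) (N.incE v) (N.dvec c1 c2 v)

/-- `vol(X) = Σ_{v ∈ X} ρ̂_v(d_v)`. -/
noncomputable def vol (N : UPolyNet V E) (c1 c2 : E → ℝ) (X : Finset V) : ℝ :=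
  ∑ v ∈ X, N.nodeVol c1 c2 v

end UPolyNet

open UPolyNet

section AuxWalk
variable {V E : Type} [DecidableEq V] {ep1 ep2 : E → V}

lemma uwalk_nil {s t : V} (h : s = t) : UWalk ep1 ep2 s t [] := h

lemma uwalk_nil_eq {s t : V} (h : UWalk ep1 ep2 s t []) : s = t := h

lemma uwalk_append {v : V} {q : List E} :
    ∀ {p : List E} {s u : V}, UWalk ep1 ep2 s u p → UWalk ep1 ep2 u v q →
      UWalk ep1 ep2 s v (p ++ q)
  | [], s, u, h, h' => by
      have hs : s = u := h
      subst hs; exact h'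
  | e :: p, s, u, h, h' => ⟨h.1, uwalk_append h.2 h'⟩

lemma uwalk_edge (e : E) : UWalk ep1 ep2 (ep1 e) (ep2 e) [e] := by
  refine ⟨Or.inl rfl, ?_⟩
  simp only [if_pos rfl]
  exact uwalk_nil rfl

lemma uwalk_edge' (e : E) : UWalk ep1 ep2 (ep2 e) (ep1 e) [e] := by
  refine ⟨Or.inr rfl, ?_⟩
  by_cases h : ep1 e = ep2 e <;> simp only [if_pos, if_neg, h] <;> exact uwalk_nil rfl

lemma uwalk_symm {F : Finset E} :
    ∀ {p : List E} {s t : V}, UWalk ep1 ep2 s t p → (∀ e ∈ p, e ∉ F) →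
      ∃ q : List E, UWalk ep1 ep2 t s q ∧ ∀ e ∈ q, e ∉ F
  | [], s, t, h, _ => ⟨[], (uwalk_nil_eq h).symm, by simp⟩
  | e :: p, s, t, h, hF => by
      obtain ⟨q, hq, hqF⟩ := uwalk_symm h.2 (fun e' he' => hF e' (List.mem_cons_of_mem _ he'))
      have hone : UWalk ep1 ep2 (if ep1 e = s then ep2 e else ep1 e) s [e] := by
        by_cases hc : ep1 e = s
        · rw [if_pos hc, ← hc]; exact uwalk_edge' e
        · rw [if_neg hc, ← h.1.resolve_left hc]; exact uwalk_edge e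
      refine ⟨q ++ [e], uwalk_append hq hone, ?_⟩
      intro e' he'
      rcases List.mem_append.mp he' with h' | h'
      · exact hqF e' h'
      · simp only [List.mem_singleton] at h'
        subst h'
        exact hF e' List.mem_cons_self

end AuxWalk

section AuxRel
variable {V E : Type} [DecidableEq V] [Fintype V] (ep1 ep2 : E → V) (F : Finset E)

/-- Reachability in `G ∖ F`. -/
def URel (u v : V) : Prop :=
  ∃ p : List E, UWalk ep1 ep2 u v p ∧ ∀ e ∈ p, e ∉ F

variable {ep1 ep2 F}

lemma urel_refl (v : V) : URel ep1 ep2 F v v := ⟨[], uwalk_nil rfl, by simp⟩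

lemma urel_symm {u v : V} (h : URel ep1 ep2 F u v) : URel ep1 ep2 F v u := by
  obtain ⟨p, hp, hpF⟩ := h
  exact uwalk_symm hp hpF

lemma urel_trans {u v w : V} (h : URel ep1 ep2 F u v) (h' : URel ep1 ep2 F v w) :
    URel ep1 ep2 F u w := by
  obtain ⟨p, hp, hpF⟩ := h
  obtain ⟨q, hq, hqF⟩ := h'
  refine ⟨p ++ q, uwalk_append hp hq, ?_⟩
  intro e he
  rcases List.mem_append.mp he with h1 | h1
  exacts [hpF e h1, hqF e h1]

variable (ep1 ep2 F)

/-- The connected component of `v` in `G ∖ F`. -/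
noncomputable def uclass (v : V) : Finset V :=
  Finset.univ.filter (fun u => URel ep1 ep2 F v u)

lemma uclass_nonempty (v : V) : ∃ u, u ∈ uclass ep1 ep2 F v :=
  ⟨v, by simp [uclass, urel_refl]⟩

/-- A canonical representative of the component of `v`. -/
noncomputable def urep (v : V) : V := (uclass_nonempty ep1 ep2 F v).choose

variable {ep1 ep2 F}

lemma urel_urep (v : V) : URel ep1 ep2 F v (urep ep1 ep2 F v) := by
  have := (uclass_nonempty ep1 ep2 F v).choose_spec
  simpa [uclass, urep] using this

lemma choose_congr {s t : Finset V} (hs : ∃ x, x ∈ s) (ht : ∃ x, x ∈ t) (h : s = t) :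
    hs.choose = ht.choose := by subst h; rfl

lemma uclass_eq {u v : V} (h : URel ep1 ep2 F u v) :
    uclass ep1 ep2 F u = uclass ep1 ep2 F v := by
  ext w
  simp only [uclass, Finset.mem_filter, Finset.mem_univ, true_and]
  exact ⟨fun h' => urel_trans (urel_symm h) h', fun h' => urel_trans h h'⟩

lemma urep_eq_of_urel {u v : V} (h : URel ep1 ep2 F u v) :
    urep ep1 ep2 F u = urep ep1 ep2 F v :=
  choose_congr _ _ (uclass_eq h)

lemma urel_of_urep_eq {u v : V} (h : urep ep1 ep2 F u = urep ep1 ep2 F v) :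
    URel ep1 ep2 F u v :=
  urel_trans (urel_urep u) (urel_symm (h ▸ urel_urep v))

end AuxRel

section AuxCut
variable {V E : Type} [DecidableEq V] [Fintype V] [Fintype E] {ep1 ep2 : E → V}

/-- Crossing `δ(S)`-avoiding walks preserves membership in `S`. -/
lemma uwalk_cut_mem {S : Finset V} :
    ∀ {p : List E} {s t : V}, UWalk ep1 ep2 s t p →
      (∀ e ∈ p, e ∉ uvcut ep1 ep2 S) → (s ∈ S ↔ t ∈ S)
  | [], s, t, h, _ => by rw [uwalk_nil_eq h]
  | e :: p, s, t, h, hF => by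
      have he : e ∉ uvcut ep1 ep2 S := hF e List.mem_cons_self
      have hiff : ep1 e ∈ S ↔ ep2 e ∈ S := by
        simp only [uvcut, Finset.mem_filter, Finset.mem_univ, true_and] at he
        tauto
      have ih := uwalk_cut_mem h.2 (fun e' h' => hF e' (List.mem_cons_of_mem _ h'))
      by_cases hc : ep1 e = s
      · rw [if_pos hc] at ih
        rw [← hc, hiff]; exact ih
      · have h2 : ep2 e = s := h.1.resolve_left hc
        rw [if_neg hc] at ih
        rw [← h2, ← hiff]; exact ih

end AuxCut

section AuxMain
variable {V E : Type} [Fintype V] [Fintype E] [DecidableEq V] [DecidableEq E]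

lemma cutCost_set_nonneg (N : UPolyNet V E) (F : Finset E) :
    ∀ c ∈ {c : ℝ | ∃ g : E → V, (∀ e ∈ F, g e = N.ep1 e ∨ g e = N.ep2 e) ∧
      c = ∑ v : V, N.rho v ((N.incE v ∩ F).filter (fun e => g e = v))}, 0 ≤ c := by
  rintro c ⟨g, hg, rfl⟩
  apply Finset.sum_nonneg
  intro v _
  apply N.rho_nonneg
  exact (Finset.filter_subset _ _).trans Finset.inter_subset_left

lemma cutCost_set_nonempty (N : UPolyNet V E) (F : Finset E) :
    ∃ c, c ∈ {c : ℝ | ∃ g : E → V, (∀ e ∈ F, g e = N.ep1 e ∨ g e = N.ep2 e) ∧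
      c = ∑ v : V, N.rho v ((N.incE v ∩ F).filter (fun e => g e = v))} :=
  ⟨_, N.ep1, fun _ _ => Or.inl rfl, rfl⟩

lemma cutCost_mono (N : UPolyNet V E) {F' F : Finset E} (h : F' ⊆ F) :
    N.cutCost F' ≤ N.cutCost F := by
  apply le_csInf (cutCost_set_nonempty N F)
  rintro c ⟨g, hg, rfl⟩
  apply le_trans (csInf_le ⟨0, cutCost_set_nonneg N F'⟩ (?_ :
    _ ∈ {c : ℝ | ∃ g : E → V, (∀ e ∈ F', g e = N.ep1 e ∨ g e = N.ep2 e) ∧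
      c = ∑ v : V, N.rho v ((N.incE v ∩ F').filter (fun e => g e = v))}))
  · apply Finset.sum_le_sum
    intro v _
    apply N.rho_mono
    · exact Finset.filter_subset_filter _ (Finset.inter_subset_inter (le_refl _) h)
    · exact (Finset.filter_subset _ _).trans Finset.inter_subset_left
  · exact ⟨g, fun e he => hg e (h he), rfl⟩

lemma cutCost_nonneg (N : UPolyNet V E) (F : Finset E) : 0 ≤ N.cutCost F :=
  le_csInf (cutCost_set_nonempty N F) (cutCost_set_nonneg N F)

/-- The bi-partition set determined by a colouring `b` of components. -/
noncomputable def Ub (ep1 ep2 : E → V) (F : Finset E) (b : V → Bool) : Finset V :=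
  Finset.univ.filter (fun v => b (urep ep1 ep2 F v) = true)

lemma uvcut_Ub_subset (ep1 ep2 : E → V) (F : Finset E) (b : V → Bool) :
    uvcut ep1 ep2 (Ub ep1 ep2 F b) ⊆ F := by
  intro e he
  by_contra heF
  have hrel : URel ep1 ep2 F (ep1 e) (ep2 e) :=
    ⟨[e], uwalk_edge e, by simpa using heF⟩
  have hrep := urep_eq_of_urel hrel
  simp only [uvcut, Ub, Finset.mem_filter, Finset.mem_univ, true_and] at he
  rw [hrep] at he
  tauto

lemma usep_Ub_of_ne {ep1 ep2 : E → V} {F : Finset E} {b : V → Bool} {x y : V}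
    (h : b (urep ep1 ep2 F x) ≠ b (urep ep1 ep2 F y)) :
    USep ep1 ep2 (uvcut ep1 ep2 (Ub ep1 ep2 F b)) x y := by
  rintro ⟨p, hp, hpF⟩
  have hmem := uwalk_cut_mem hp hpF
  simp only [Ub, Finset.mem_filter, Finset.mem_univ, true_and] at hmem
  apply h
  cases hx : b (urep ep1 ep2 F x) <;> cases hy : b (urep ep1 ep2 F y) <;>
    simp [hx, hy] at hmem ⊢

lemma urep_ne_of_usep {ep1 ep2 : E → V} {F : Finset E} {x y : V}
    (h : USep ep1 ep2 F x y) : urep ep1 ep2 F x ≠ urep ep1 ep2 F y := by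
  intro heq
  exact h (urel_of_urep_eq heq)

lemma half_card_le {x y : V} (hxy : x ≠ y) :
    (((Finset.univ : Finset (V → Bool))).card : ℝ) / 2 ≤
      ((Finset.univ.filter (fun b : V → Bool => b x ≠ b y)).card : ℝ) := by
  have hsplit : (Finset.univ.filter (fun b : V → Bool => b x ≠ b y)).card
      + (Finset.univ.filter (fun b : V → Bool => ¬ b x ≠ b y)).card
      = (Finset.univ : Finset (V → Bool)).card :=
    Finset.card_filter_add_card_filter_not (fun b : V → Bool => b x ≠ b y)
  have hinj : (Finset.univ.filter (fun b : V → Bool => ¬ b x ≠ b y)).card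
      ≤ (Finset.univ.filter (fun b : V → Bool => b x ≠ b y)).card := by
    apply Finset.card_le_card_of_injOn (fun b => Function.update b x (!(b x)))
    · intro b hb
      simp only [Finset.coe_filter, Set.mem_setOf_eq, Finset.mem_coe, Finset.mem_filter, Finset.mem_univ, true_and, not_not] at hb ⊢
      rw [Function.update_self, Function.update_of_ne (Ne.symm hxy), ← hb]
      simp
    · intro b1 _ b2 _ heq
      funext w
      by_cases hw : w = x
      · subst hw
        have := congrFun heq w
        simp only at this
        rw [Function.update_self, Function.update_self] at this
        simpa using this
      · have := congrFun heq w
        simp only at this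
        rwa [Function.update_of_ne hw, Function.update_of_ne hw] at this
  have h2 : (Finset.univ : Finset (V → Bool)).card
      ≤ 2 * (Finset.univ.filter (fun b : V → Bool => b x ≠ b y)).card := by linarith
  have := Nat.cast_le (α := ℝ) |>.mpr h2
  push_cast at this
  linarith

end AuxMain

/-- In an undirected polymatroidal network with source-sink pairs
`(s i, t i)` and demands `D i ≥ 0`, for every edge set `F` with `D(F) > 0` there is a
bi-partition cut `δ(S)` whose sparsity is at most twice the sparsity of `F`. -/
theorem bipartition_cut_sparsity {V E : Type} [Fintype V] [Fintype E]
    [DecidableEq V] [DecidableEq E] (N : UPolyNet V E) {k : ℕ}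
    (s t : Fin k → V) (D : Fin k → ℝ) (hD : ∀ i, 0 ≤ D i)
    (F : Finset E) (hF : 0 < N.sepDemand s t D F) :
    ∃ S : Finset V, 0 < N.sepDemand s t D (uvcut N.ep1 N.ep2 S) ∧
      N.cutCost (uvcut N.ep1 N.ep2 S) / N.sepDemand s t D (uvcut N.ep1 N.ep2 S) ≤
        2 * (N.cutCost F / N.sepDemand s t D F) := by
  classical
  set cut : (V → Bool) → Finset E := fun b => uvcut N.ep1 N.ep2 (Ub N.ep1 N.ep2 F b) with hcut
  -- Step 1: find a colouring b with large separated demand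
  have key : ∃ b : V → Bool, N.sepDemand s t D F / 2 ≤ N.sepDemand s t D (cut b) := by
    by_contra hcon
    push_neg at hcon
    have hne : (Finset.univ : Finset (V → Bool)).Nonempty := Finset.univ_nonempty
    have hlt : ∑ b : V → Bool, N.sepDemand s t D (cut b)
        < ∑ _b : V → Bool, N.sepDemand s t D F / 2 :=
      Finset.sum_lt_sum_of_nonempty hne (fun b _ => hcon b)
    have hge : ∑ _b : V → Bool, N.sepDemand s t D F / 2
        ≤ ∑ b : V → Bool, N.sepDemand s t D (cut b) := by
      have step1 : ∀ b : V → Bool,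
          ∑ i : Fin k, (if USep N.ep1 N.ep2 F (s i) (t i) ∧
              b (urep N.ep1 N.ep2 F (s i)) ≠ b (urep N.ep1 N.ep2 F (t i))
            then D i else 0) ≤ N.sepDemand s t D (cut b) := by
        intro b
        apply Finset.sum_le_sum
        intro i _
        by_cases hP : USep N.ep1 N.ep2 F (s i) (t i) ∧
            b (urep N.ep1 N.ep2 F (s i)) ≠ b (urep N.ep1 N.ep2 F (t i))
        · rw [if_pos hP, if_pos (usep_Ub_of_ne hP.2)]
        · rw [if_neg hP]
          split_ifs with h'
          · exact hD i
          · exact le_refl 0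
      calc ∑ _b : V → Bool, N.sepDemand s t D F / 2
          = (Finset.univ : Finset (V → Bool)).card • (N.sepDemand s t D F / 2) := by
            rw [Finset.sum_const]
        _ = ((Finset.univ : Finset (V → Bool)).card : ℝ) * (N.sepDemand s t D F / 2) := by
            rw [nsmul_eq_mul]
        _ = ∑ i : Fin k, (if USep N.ep1 N.ep2 F (s i) (t i) then
              ((Finset.univ : Finset (V → Bool)).card : ℝ) / 2 * D i else 0) := by
            rw [UPolyNet.sepDemand, Finset.sum_div, Finset.mul_sum]
            apply Finset.sum_congr rfl
            intro i _
            split_ifs with h' <;> ring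
        _ ≤ ∑ i : Fin k, (if USep N.ep1 N.ep2 F (s i) (t i) then
              ((Finset.univ.filter (fun b : V → Bool =>
                b (urep N.ep1 N.ep2 F (s i)) ≠ b (urep N.ep1 N.ep2 F (t i)))).card : ℝ)
                * D i else 0) := by
            apply Finset.sum_le_sum
            intro i _
            split_ifs with h'
            · exact mul_le_mul_of_nonneg_right (half_card_le (urep_ne_of_usep h')) (hD i)
            · exact le_refl 0
        _ = ∑ i : Fin k, ∑ b : V → Bool, (if USep N.ep1 N.ep2 F (s i) (t i) ∧
              b (urep N.ep1 N.ep2 F (s i)) ≠ b (urep N.ep1 N.ep2 F (t i))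
            then D i else 0) := by
            apply Finset.sum_congr rfl
            intro i _
            by_cases h' : USep N.ep1 N.ep2 F (s i) (t i)
            · rw [if_pos h']
              simp only [h', true_and]
              rw [← Finset.sum_filter, Finset.sum_const, nsmul_eq_mul]
            · rw [if_neg h']
              simp [h']
        _ = ∑ b : V → Bool, ∑ i : Fin k, (if USep N.ep1 N.ep2 F (s i) (t i) ∧
              b (urep N.ep1 N.ep2 F (s i)) ≠ b (urep N.ep1 N.ep2 F (t i))
            then D i else 0) := Finset.sum_comm
        _ ≤ ∑ b : V → Bool, N.sepDemand s t D (cut b) :=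
            Finset.sum_le_sum (fun b _ => step1 b)
    linarith
  obtain ⟨b, hb⟩ := key
  have hpos : 0 < N.sepDemand s t D (cut b) := lt_of_lt_of_le (by linarith) hb
  refine ⟨Ub N.ep1 N.ep2 F b, hpos, ?_⟩
  have hmono : N.cutCost (cut b) ≤ N.cutCost F :=
    cutCost_mono N (uvcut_Ub_subset N.ep1 N.ep2 F b)
  have hd : N.cutCost (cut b) / N.sepDemand s t D (cut b)
      ≤ N.cutCost F / (N.sepDemand s t D F / 2) :=
    div_le_div₀ (cutCost_nonneg N F) hmono (by linarith) hb
  have heq : N.cutCost F / (N.sepDemand s t D F / 2)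
      = 2 * (N.cutCost F / N.sepDemand s t D F) := by
    rw [div_div_eq_mul_div, mul_comm, mul_div_assoc]
  rw [heq] at hd
  exact hd
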